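/- Consider the deterministic walk on S = {0, 1, 2} driven by the doubling map T : [0,1] → [0,1], Tx := 2x mod 1 (with Lebesgue measure), with transition functions f_0(x) = 0 for x ∈ [3/4, 1), 1 for x ∈ [1/4, 3/4), 2 for x ∈ [0, 1/4); f_1(x) = 0 for x ∈ [1/4, 1/2), 1 for x ∈ [0, 1/4) ∪ [3/4, 1], 2 for x ∈ [1/2, 3/4); f_2(x) = 0 for x ∈ [0, 1/4) ∪ [1/2, 3/4), 2 for x ∈ [1/4, 1/2) ∪ [3/4, 1]. Then for Lebesgue-almost every x ∈ [0, 1/2), the walk started at state 0 visits all three states 0, 1, 2 infinitely often: for each j ∈ S there are infinitely many n with U_{0,n}(x) = j. -/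

import Mathlib

open MeasureTheory Set Filter

/-- The skew product `T_f (x, i) = (T x, f_i x)` driving a deterministic walk. -/
def detSkew {X S : Type*} (T : X → X) (f : S → X → S) : X × S → X × S :=
  fun p => (T p.1, f p.2 p.1)

/-- The deterministic walk `U_{i,n}(x) = π₂ (T_f^n (x, i))`. -/
def detWalk {X S : Type*} (T : X → X) (f : S → X → S) (i : S) (n : ℕ) (x : X) : S :=
  ((detSkew T f)^[n] (x, i)).2

/-- The deterministic walk is transitive on `S` if for all `i j`, a.e. point
visits `j` at some positive time when started from `i`. -/
def WalkTransitive {X S : Type*} [MeasurableSpace X] (m : Measure X)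
    (T : X → X) (f : S → X → S) : Prop :=
  ∀ i j : S, m {x | ∃ n, 1 ≤ n ∧ detWalk T f i n x = j} = 1

/-- A (non-singular) Markov transformation with Markov partition `P`. -/
structure IsMarkovMap {Y : Type*} [MeasurableSpace Y] (μ : Measure Y) (R : Y → Y)
    (P : Set (Set Y)) : Prop where
  nonsingular : ∀ A : Set Y, MeasurableSet A → μ A = 0 → μ (R ⁻¹' A) = 0
  measurableSet : ∀ a ∈ P, MeasurableSet a
  pairwiseDisjoint : P.PairwiseDisjoint id
  sUnion_eq : ⋃₀ P = Set.univ
  image_sUnion : ∀ a ∈ P, ∃ Q ⊆ P, R '' a = ⋃₀ Q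
  injOn : ∀ a ∈ P, Set.InjOn R a

/-- `a` communicates with `b`: a positive measure set of points of `a` visits `b`. -/
def Communicates {Y : Type*} [MeasurableSpace Y] (μ : Measure Y) (R : Y → Y)
    (a b : Set Y) : Prop :=
  0 < μ {x | x ∈ a ∧ ∃ n, 1 ≤ n ∧ R^[n] x ∈ b}

/-- The communication class of `a` in the partition `P`. -/
def commClass {Y : Type*} [MeasurableSpace Y] (μ : Measure Y) (R : Y → Y)
    (P : Set (Set Y)) (a : Set Y) : Set (Set Y) :=
  {b ∈ P | Communicates μ R a b ∧ Communicates μ R b a}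

/-- `C` is a communication class of the partition `P`. -/
def IsCommClass {Y : Type*} [MeasurableSpace Y] (μ : Measure Y) (R : Y → Y)
    (P : Set (Set Y)) (C : Set (Set Y)) : Prop :=
  ∃ a ∈ P, C = commClass μ R P a

/-- `C` is a closed communication class of the partition `P`. -/
def IsClosedCommClass {Y : Type*} [MeasurableSpace Y] (μ : Measure Y) (R : Y → Y)
    (P : Set (Set Y)) (C : Set (Set Y)) : Prop :=
  IsCommClass μ R P C ∧ ∀ a ∈ C, ∀ b ∈ P, Communicates μ R a b → Communicates μ R b a

/-- The product partition `β̃ = β × S`. -/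
def prodPartition {X : Type*} (S : Type*) (β : Set (Set X)) : Set (Set (X × S)) :=
  {c | ∃ a ∈ β, ∃ i : S, c = a ×ˢ ({i} : Set S)}

/-- The measure `μ = (m / #S) × counting measure` on `X × S`. -/
noncomputable def fiberMeasure {X : Type*} (S : Type*) [MeasurableSpace X]
    [MeasurableSpace S] [Fintype S] (m : Measure X) : Measure (X × S) :=
  (Fintype.card S : ENNReal)⁻¹ • m.prod Measure.count

/-- The `n`-cylinder `[w 0, …, w (n-1)] = ⋂ j, R^{-j} (w j)`. -/
def cylinder {Y : Type*} (R : Y → Y) {n : ℕ} (w : Fin n → Set Y) : Set Y :=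
  ⋂ j : Fin n, (R^[(j : ℕ)]) ⁻¹' w j

/-- The Strong Distortion Property: the Radon–Nikodym derivatives
`v'_a = d(μ ∘ R^{-n})/dμ` on images of cylinders have a.e. bounded ratio. -/
def StrongDistortion {Y : Type*} [MeasurableSpace Y] (μ : Measure Y) (R : Y → Y)
    (P : Set (Set Y)) : Prop :=
  ∃ D : ENNReal, 1 ≤ D ∧ D ≠ ⊤ ∧
    ∀ n : ℕ, 1 ≤ n → ∀ w : Fin n → Set Y, (∀ j, w j ∈ P) →
      ∀ v : Y → ENNReal, Measurable v →
        (∀ B : Set Y, MeasurableSet B →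
          ∫⁻ x in (R^[n] '' cylinder R w) ∩ B, v x ∂μ = μ (cylinder R w ∩ R^[n] ⁻¹' B)) →
        ∀ᵐ x ∂μ.restrict (R^[n] '' cylinder R w),
          ∀ᵐ y ∂μ.restrict (R^[n] '' cylinder R w), v x / v y ≤ D

/-- The Finite Images property for a Markov map. -/
def FiniteImages {Y : Type*} (R : Y → Y) (P : Set (Set Y)) : Prop :=
  {s : Set Y | ∃ a ∈ P, s = R '' a}.Finite

/-- The partition `P` is irreducible under `R`: all elements intercommunicate. -/
def IrreduciblePartition {Y : Type*} [MeasurableSpace Y] (μ : Measure Y) (R : Y → Y)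
    (P : Set (Set Y)) : Prop :=
  ∀ a ∈ P, ∀ b ∈ P, Communicates μ R a b

/-- The doubling map `T x = 2 x mod 1` on `[0, 1]`. -/
noncomputable def doubling : ℝ → ℝ := fun x => Int.fract (2 * x)

open scoped Classical in
/-- The environment `f_0, f_1, f_2` of the counter-example. -/
noncomputable def exEnv : Fin 3 → ℝ → Fin 3 := fun i x =>
  if i = 0 then
    (if 3/4 ≤ x ∧ x < 1 then 0
     else if 1/4 ≤ x ∧ x < 3/4 then 1
     else 2)
  else if i = 1 then
    (if 1/4 ≤ x ∧ x < 1/2 then 0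
     else if (0 ≤ x ∧ x < 1/4) ∨ (3/4 ≤ x ∧ x ≤ 1) then 1
     else 2)
  else
    (if (0 ≤ x ∧ x < 1/4) ∨ (1/2 ≤ x ∧ x < 3/4) then 0
     else 2)

lemma detSkew_iterate_fst {X S : Type*} (T : X → X) (f : S → X → S) (x : X) (i : S) (n : ℕ) :
    ((detSkew T f)^[n] (x, i)).1 = T^[n] x := by
  induction n with
  | zero => rfl
  | succ n ih =>
    rw [Function.iterate_succ_apply', Function.iterate_succ_apply']
    show T ((detSkew T f)^[n] (x, i)).1 = T (T^[n] x)
    rw [ih]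

lemma detWalk_succ {X S : Type*} (T : X → X) (f : S → X → S) (i : S) (n : ℕ) (x : X) :
    detWalk T f i (n+1) x = f (detWalk T f i n x) (T^[n] x) := by
  unfold detWalk
  rw [Function.iterate_succ_apply']
  show f ((detSkew T f)^[n] (x, i)).2 ((detSkew T f)^[n] (x, i)).1 = _
  rw [detSkew_iterate_fst]

lemma exEnv_zero (x : ℝ) : exEnv 0 x =
    if 3/4 ≤ x ∧ x < 1 then 0 else if 1/4 ≤ x ∧ x < 3/4 then 1 else 2 := by
  simp [exEnv]

lemma exEnv_one (x : ℝ) : exEnv 1 x =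
    if 1/4 ≤ x ∧ x < 1/2 then 0
    else if (0 ≤ x ∧ x < 1/4) ∨ (3/4 ≤ x ∧ x ≤ 1) then 1 else 2 := by
  simp [exEnv]

lemma exEnv_two (x : ℝ) : exEnv 2 x =
    if (0 ≤ x ∧ x < 1/4) ∨ (1/2 ≤ x ∧ x < 3/4) then 0 else 2 := by
  simp [exEnv]

lemma doubling_eq (y : ℝ) (m : ℤ) (h1 : (m:ℝ) ≤ 2*y) (h2 : 2*y < m+1) :
    doubling y = 2*y - m := by
  unfold doubling
  rw [Int.fract, Int.floor_eq_iff.mpr ⟨h1, h2⟩]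

lemma walk_inv (x : ℝ) (hx0 : 0 ≤ x) (hx : x < 1/2) (n : ℕ) :
    doubling^[n] x ∈ Ico (0:ℝ) 1 ∧
      (detWalk doubling exEnv 0 n x = 2 ∨
       (detWalk doubling exEnv 0 n x = 0 ∧ doubling^[n] x < 1/2) ∨
       (detWalk doubling exEnv 0 n x = 1 ∧ 1/2 ≤ doubling^[n] x)) := by
  induction n with
  | zero =>
    simp only [Function.iterate_zero_apply]
    exact ⟨⟨hx0, by linarith⟩, Or.inr (Or.inl ⟨rfl, hx⟩)⟩
  | succ n ih =>
    obtain ⟨⟨hy0, hy1⟩, hs⟩ := ih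
    set y := doubling^[n] x with hydef
    have hstep : doubling^[n+1] x = doubling y := Function.iterate_succ_apply' doubling n x
    have hw : detWalk doubling exEnv 0 (n+1) x = exEnv (detWalk doubling exEnv 0 n x) y :=
      detWalk_succ doubling exEnv 0 n x
    rcases lt_or_ge y (1/4) with h1 | h1
    · -- y ∈ [0, 1/4)
      have hd : doubling y = 2*y := by
        rw [doubling_eq y 0 (by push_cast; linarith) (by push_cast; linarith)]; push_cast; ring
      refine ⟨by rw [hstep, hd]; constructor <;> linarith, ?_⟩
      rcases hs with h2 | ⟨h0, _⟩ | ⟨hone, hge⟩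
      · right; left
        rw [hw, h2, exEnv_two, if_pos (Or.inl ⟨hy0, h1⟩), hstep, hd]
        exact ⟨rfl, by linarith⟩
      · left
        rw [hw, h0, exEnv_zero, if_neg (by rintro ⟨a, b⟩; linarith),
          if_neg (by rintro ⟨a, b⟩; linarith)]
      · linarith
    rcases lt_or_ge y (1/2) with h2 | h2
    · -- y ∈ [1/4, 1/2)
      have hd : doubling y = 2*y := by
        rw [doubling_eq y 0 (by push_cast; linarith) (by push_cast; linarith)]; push_cast; ring
      refine ⟨by rw [hstep, hd]; constructor <;> linarith, ?_⟩
      rcases hs with h2' | ⟨h0, _⟩ | ⟨hone, hge⟩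
      · left
        rw [hw, h2', exEnv_two, if_neg (by rintro (⟨a, b⟩ | ⟨a, b⟩) <;> linarith)]
      · right; right
        rw [hw, h0, exEnv_zero, if_neg (by rintro ⟨a, b⟩; linarith),
          if_pos ⟨h1, by linarith⟩, hstep, hd]
        exact ⟨rfl, by linarith⟩
      · linarith
    rcases lt_or_ge y (3/4) with h3 | h3
    · -- y ∈ [1/2, 3/4)
      have hd : doubling y = 2*y - 1 := by
        rw [doubling_eq y 1 (by push_cast; linarith) (by push_cast; linarith)]; push_cast; ring
      refine ⟨by rw [hstep, hd]; constructor <;> linarith, ?_⟩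
      rcases hs with h2' | ⟨h0, hlt⟩ | ⟨hone, hge⟩
      · right; left
        rw [hw, h2', exEnv_two, if_pos (Or.inr ⟨h2, h3⟩), hstep, hd]
        exact ⟨rfl, by linarith⟩
      · linarith
      · left
        rw [hw, hone, exEnv_one, if_neg (by rintro ⟨a, b⟩; linarith),
          if_neg (by rintro (⟨a, b⟩ | ⟨a, b⟩) <;> linarith)]
    · -- y ∈ [3/4, 1)
      have hd : doubling y = 2*y - 1 := by
        rw [doubling_eq y 1 (by push_cast; linarith) (by push_cast; linarith)]; push_cast; ring
      refine ⟨by rw [hstep, hd]; constructor <;> linarith, ?_⟩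
      rcases hs with h2' | ⟨h0, hlt⟩ | ⟨hone, hge⟩
      · left
        rw [hw, h2', exEnv_two, if_neg (by rintro (⟨a, b⟩ | ⟨a, b⟩) <;> linarith)]
      · linarith
      · right; right
        rw [hw, hone, exEnv_one, if_neg (by rintro ⟨a, b⟩; linarith),
          if_pos (Or.inr ⟨h3, by linarith⟩), hstep, hd]
        exact ⟨rfl, by linarith⟩

lemma hit (x : ℝ) (hx0 : 0 ≤ x) (hx : x < 1/2) (n : ℕ)
    (hy : doubling^[n] x ∈ Ico (5/16 : ℝ) (3/8)) (j : Fin 3) :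
    ∃ t, t ≤ 3 ∧ detWalk doubling exEnv 0 (n + t) x = j := by
  obtain ⟨hy5, hy38⟩ := hy
  set y := doubling^[n] x with hydef
  have hstep1 : doubling^[n+1] x = doubling y := Function.iterate_succ_apply' doubling n x
  have hd1 : doubling y = 2*y := by
    rw [doubling_eq y 0 (by push_cast; linarith) (by push_cast; linarith)]; push_cast; ring
  set y1 := doubling^[n+1] x with hy1def
  have hy1 : y1 = 2*y := by rw [hstep1, hd1]
  have hstep2 : doubling^[n+2] x = doubling y1 := Function.iterate_succ_apply' doubling (n+1) x
  have hd2 : doubling y1 = 2*y1 - 1 := by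
    rw [doubling_eq y1 1 (by push_cast; rw [hy1]; linarith) (by push_cast; rw [hy1]; linarith)]
    push_cast; ring
  set y2 := doubling^[n+2] x with hy2def
  have hy2 : y2 = 2*y1 - 1 := by rw [hstep2, hd2]
  have hw1 : detWalk doubling exEnv 0 (n+1) x = exEnv (detWalk doubling exEnv 0 n x) y :=
    detWalk_succ doubling exEnv 0 n x
  have hw2 : detWalk doubling exEnv 0 (n+2) x = exEnv (detWalk doubling exEnv 0 (n+1) x) y1 :=
    detWalk_succ doubling exEnv 0 (n+1) x
  have hw3 : detWalk doubling exEnv 0 (n+3) x = exEnv (detWalk doubling exEnv 0 (n+2) x) y2 :=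
    detWalk_succ doubling exEnv 0 (n+2) x
  rcases (walk_inv x hx0 hx n).2 with h2 | ⟨h0, _⟩ | ⟨hone, hge⟩
  · -- s_n = 2: states 2, 2, 0, 1
    have s1 : detWalk doubling exEnv 0 (n+1) x = 2 := by
      rw [hw1, h2, exEnv_two, if_neg (by rintro (⟨a, b⟩ | ⟨a, b⟩) <;> linarith)]
    have s2 : detWalk doubling exEnv 0 (n+2) x = 0 := by
      rw [hw2, s1, exEnv_two, if_pos (Or.inr ⟨by linarith [hy1 ▸ (by linarith : (5/8:ℝ) ≤ 2*y)],
        by rw [hy1]; linarith⟩)]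
    have s3 : detWalk doubling exEnv 0 (n+3) x = 1 := by
      rw [hw3, s2, exEnv_zero, if_neg (by rintro ⟨a, b⟩; rw [hy2, hy1] at a; linarith),
        if_pos ⟨by rw [hy2, hy1]; linarith, by rw [hy2, hy1]; linarith⟩]
    fin_cases j
    · exact ⟨2, by norm_num, s2⟩
    · exact ⟨3, by norm_num, s3⟩
    · exact ⟨0, by norm_num, by rw [Nat.add_zero]; exact h2⟩
  · -- s_n = 0: states 0, 1, 2
    have s1 : detWalk doubling exEnv 0 (n+1) x = 1 := by
      rw [hw1, h0, exEnv_zero, if_neg (by rintro ⟨a, b⟩; linarith), if_pos ⟨by linarith, by linarith⟩]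
    have s2 : detWalk doubling exEnv 0 (n+2) x = 2 := by
      rw [hw2, s1, exEnv_one, if_neg (by rintro ⟨a, b⟩; rw [hy1] at b; linarith),
        if_neg (by rintro (⟨a, b⟩ | ⟨a, b⟩) <;> rw [hy1] at * <;> linarith)]
    fin_cases j
    · exact ⟨0, by norm_num, by rw [Nat.add_zero]; exact h0⟩
    · exact ⟨1, by norm_num, s1⟩
    · exact ⟨2, by norm_num, s2⟩
  · linarith

lemma ergodic_frequently {α : Type*} [MeasurableSpace α] {f : α → α} {μ : Measure α}
    [IsFiniteMeasure μ] (hf : Ergodic f μ) {s : Set α} (hs : MeasurableSet s)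
    (h0 : μ s ≠ 0) : ∀ᵐ x ∂μ, ∃ᶠ n in atTop, f^[n] x ∈ s := by
  set G : Set α := {x | ∃ᶠ n in atTop, f^[n] x ∈ s} with hGdef
  have hGm : MeasurableSet G := by
    have hG : G = ⋂ N, ⋃ n, ⋃ (_ : N ≤ n), f^[n] ⁻¹' s := by
      ext x
      simp [hGdef, frequently_atTop]
    rw [hG]
    exact MeasurableSet.iInter fun N => MeasurableSet.iUnion fun n =>
      MeasurableSet.iUnion fun _ => (hf.toMeasurePreserving.measurable.iterate n) hs
  have hGinv : f ⁻¹' G = G := by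
    ext x
    simp only [mem_preimage, hGdef, mem_setOf_eq, frequently_atTop]
    constructor
    · intro h N
      obtain ⟨n, hn, hmem⟩ := h N
      exact ⟨n+1, le_trans hn (Nat.le_succ n), by rwa [Function.iterate_succ_apply]⟩
    · intro h N
      obtain ⟨n, hn, hmem⟩ := h (N+1)
      obtain ⟨m, rfl⟩ : ∃ m, n = m + 1 := ⟨n-1, by omega⟩
      rw [Function.iterate_succ_apply] at hmem
      exact ⟨m, by omega, hmem⟩
  rcases hf.toPreErgodic.ae_empty_or_univ hGm hGinv with h | h
  · exfalso
    have hc : Conservative f μ := hf.toMeasurePreserving.conservative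
    have hae := hc.ae_mem_imp_frequently_image_mem hs.nullMeasurableSet
    have hle : μ s ≤ μ G := by
      apply measure_mono_ae
      filter_upwards [hae] with x hx hxs
      exact hx hxs
    rw [ae_eq_empty] at h
    exact h0 (le_antisymm (h ▸ hle) zero_le)
  · rw [ae_eq_univ] at h
    rw [ae_iff]
    exact h

noncomputable def Dm : AddCircle (1:ℝ) → AddCircle (1:ℝ) := fun z => (2:ℕ) • z

noncomputable def sCirc : Set (AddCircle (1:ℝ)) :=
  haveI : Fact ((0:ℝ) < 1) := ⟨one_pos⟩
  {z | (5/16:ℝ) ≤ ((AddCircle.equivIco 1 0 z : Ico (0:ℝ) (0+1)) : ℝ) ∧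
       ((AddCircle.equivIco 1 0 z : Ico (0:ℝ) (0+1)) : ℝ) < 3/8}

section circ
local instance : Fact ((0:ℝ) < 1) := ⟨one_pos⟩

lemma sCirc_meas : MeasurableSet sCirc := by
  have h : sCirc = (AddCircle.measurableEquivIco 1 0) ⁻¹'
      (Subtype.val ⁻¹' Ico (5/16:ℝ) (3/8)) := rfl
  rw [h]
  exact (AddCircle.measurableEquivIco 1 0).measurable
    (measurable_subtype_coe measurableSet_Ico)

lemma mem_sCirc {y : ℝ} (hy : y ∈ Ico (0:ℝ) (0+1)) :
    ((y : ℝ) : AddCircle (1:ℝ)) ∈ sCirc ↔ y ∈ Ico (5/16:ℝ) (3/8) := by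
  have h : (AddCircle.equivIco 1 0) (↑y) = ⟨y, hy⟩ := by
    rw [Equiv.apply_eq_iff_eq_symm_apply]; rfl
  simp only [sCirc, mem_setOf_eq, h, mem_Ico]

lemma coe_doubling (y : ℝ) : ((doubling y : ℝ) : AddCircle (1:ℝ)) = Dm (y : AddCircle (1:ℝ)) := by
  have h1 : ((doubling y : ℝ) : AddCircle (1:ℝ)) = ((2*y : ℝ) : AddCircle (1:ℝ)) := by
    have : doubling y = 2*y - (⌊2*y⌋ : ℝ) := rfl
    rw [this, AddCircle.coe_sub, sub_eq_self.mpr, ]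
    rw [AddCircle.coe_eq_zero_iff]
    exact ⟨⌊2*y⌋, by simp⟩
  rw [h1]
  show _ = ((2:ℕ) • (y : AddCircle (1:ℝ)))
  rw [← AddCircle.coe_nsmul]
  norm_num [nsmul_eq_mul]
end circ

lemma measurable_Dm : Measurable Dm := by
  have h : Dm = fun z => z + z := by funext z; simp [Dm, two_nsmul]
  rw [h]
  exact measurable_id.add measurable_id

section circ2
local instance : Fact ((0:ℝ) < 1) := ⟨one_pos⟩

lemma sCirc_pos : volume sCirc ≠ 0 := by
  have hmk := AddCircle.measurePreserving_mk (T := (1:ℝ)) 0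
  have h1 : volume.restrict (Ioc (0:ℝ) (0+1))
      ((QuotientAddGroup.mk : ℝ → AddCircle (1:ℝ)) ⁻¹' sCirc) = volume sCirc :=
    hmk.measure_preimage sCirc_meas.nullMeasurableSet
  have hsub : Ico (5/16:ℝ) (3/8) ⊆ (QuotientAddGroup.mk : ℝ → AddCircle (1:ℝ)) ⁻¹' sCirc := by
    intro z hz
    exact (mem_sCirc ⟨by linarith [hz.1], by linarith [hz.2]⟩).mpr hz
  have h3 : Ico (5/16:ℝ) (3/8) ∩ Ioc (0:ℝ) (0+1) = Ico (5/16:ℝ) (3/8) := by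
    apply inter_eq_self_of_subset_left
    intro z hz
    exact ⟨by linarith [hz.1], by linarith [hz.2]⟩
  intro hcon
  have h2 := measure_mono (μ := volume.restrict (Ioc (0:ℝ) (0+1))) hsub
  rw [h1, hcon, Measure.restrict_apply measurableSet_Ico, h3, Real.volume_Ico] at h2
  have hpos : (0:ENNReal) < ENNReal.ofReal (3/8 - 5/16) := by
    rw [ENNReal.ofReal_pos]; norm_num
  exact hpos.not_ge h2

lemma freq : ∀ᵐ x ∂(volume.restrict (Ico (0:ℝ) (1/2))),
    ∃ᶠ n in atTop, doubling^[n] x ∈ Ico (5/16:ℝ) (3/8) := by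
  have herg : Ergodic Dm := AddCircle.ergodic_nsmul (by norm_num)
  have hae : ∀ᵐ z ∂(volume : Measure (AddCircle (1:ℝ))),
      ∃ᶠ n in atTop, Dm^[n] z ∈ sCirc :=
    ergodic_frequently herg sCirc_meas sCirc_pos
  have hmk := AddCircle.measurePreserving_mk (T := (1:ℝ)) 0
  have hpull : ∀ᵐ y ∂(volume.restrict (Ioc (0:ℝ) (0+1))),
      ∃ᶠ n in atTop, Dm^[n] ((y:ℝ) : AddCircle (1:ℝ)) ∈ sCirc := by
    rw [ae_iff] at hae ⊢
    exact hmk.quasiMeasurePreserving.preimage_null hae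
  have h12 : ∀ᵐ y ∂(volume.restrict (Ioc (0:ℝ) (1/2))),
      ∃ᶠ n in atTop, Dm^[n] ((y:ℝ) : AddCircle (1:ℝ)) ∈ sCirc :=
    ae_restrict_of_ae_restrict_of_subset
      (fun z hz => mem_Ioc.mpr ⟨(mem_Ioc.mp hz).1, by linarith [(mem_Ioc.mp hz).2]⟩) hpull
  have h13 : ∀ᵐ y ∂(volume.restrict (Ico (0:ℝ) (1/2))),
      ∃ᶠ n in atTop, Dm^[n] ((y:ℝ) : AddCircle (1:ℝ)) ∈ sCirc :=
    ae_restrict_of_ae_eq_of_ae_restrict (Ioo_ae_eq_Ioc.symm.trans Ioo_ae_eq_Ico) h12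
  filter_upwards [h13, ae_restrict_mem measurableSet_Ico] with y hy hmem
  have hy01 : ∀ n, doubling^[n] y ∈ Ico (0:ℝ) (0+1) := by
    intro n
    induction n with
    | zero =>
      simp only [Function.iterate_zero_apply]
      exact ⟨hmem.1, by linarith [hmem.2]⟩
    | succ n ih =>
      rw [Function.iterate_succ_apply']
      exact ⟨Int.fract_nonneg _, by
        have := Int.fract_lt_one (2 * (doubling^[n] y))
        simpa [doubling] using by linarith⟩
  have hcomm : ∀ n, ((doubling^[n] y : ℝ) : AddCircle (1:ℝ)) = Dm^[n] ((y:ℝ) : AddCircle (1:ℝ)) := by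
    intro n
    induction n with
    | zero => rfl
    | succ n ih =>
      rw [Function.iterate_succ_apply', Function.iterate_succ_apply', coe_doubling, ih]
  refine hy.mono fun n hn => ?_
  rw [← hcomm n] at hn
  exact (mem_sCirc (hy01 n)).mp hn
end circ2

/-- For the walk driven by the doubling map in the environment `exEnv`,
for Lebesgue-a.e. `x ∈ [0, 1/2)`, the walk started at state `0` visits all three states
infinitely often. -/
theorem stmt_12 :
    ∀ᵐ x ∂(volume.restrict (Set.Ico (0 : ℝ) (1/2))),
      ∀ j : Fin 3, ∃ᶠ n in Filter.atTop, detWalk doubling exEnv 0 n x = j := by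
  filter_upwards [freq, ae_restrict_mem measurableSet_Ico] with x hfreq hx j
  rw [frequently_atTop]
  intro N
  obtain ⟨n, hn, hmemn⟩ := frequently_atTop.mp hfreq N
  obtain ⟨t, _, hwalk⟩ := hit x hx.1 hx.2 n hmemn j
  exact ⟨n + t, le_trans hn (Nat.le_add_right n t), hwalk⟩
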